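/- Let G be a finitely generated group with a quasi-geodesic bicombing σ (with quasi-geodesic constants λ, ε). If H ≤ G is σ-quasi-convex with constant k, then H is finitely generated and the inclusion H ↪ G is a quasi-isometric embedding. -/

import Mathlib

/-- The set of lengths of words over `X ∪ X⁻¹` representing `g`. -/
def relWords {G : Type*} [Group G] (X : Set G) (g : G) : Set ℕ :=
  {n | ∃ l : List G, l.length = n ∧ (∀ x ∈ l, x ∈ X ∨ x⁻¹ ∈ X) ∧ l.prod = g}

/-- The word norm of `g` with respect to the generating set `X`. -/
noncomputable def wordNorm {G : Type*} [Group G] (X : Set G) (g : G) : ℕ :=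
  sInf (relWords X g)

/-- The word metric on `G` with respect to the generating set `X`. -/
noncomputable def wordDist {G : Type*} [Group G] (X : Set G) (g h : G) : ℕ :=
  wordNorm X (g⁻¹ * h)

/-- A bicombing of the Cayley graph of `G` with respect to `X`:  `σ x y` is a
discrete path from `x` to `y` of length `T x y` (extended constantly beyond
`T x y`), moving distance at most one at each step. -/
structure IsBicombing {G : Type*} [Group G] (X : Set G)
    (σ : G → G → ℕ → G) (T : G → G → ℕ) : Prop where
  start : ∀ x y, σ x y 0 = x
  ends : ∀ x y t, T x y ≤ t → σ x y t = y
  step : ∀ x y t, wordDist X (σ x y t) (σ x y (t + 1)) ≤ 1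

/-- Equivariance of a bicombing: `g · σ(x,y) = σ(gx, gy)`. -/
def IsEquivariantBicombing {G : Type*} [Group G] (σ : G → G → ℕ → G) : Prop :=
  ∀ g x y : G, ∀ t : ℕ, σ (g * x) (g * y) t = g * σ x y t

/-- Boundedness of a bicombing with constants `k₁, k₂`:  combing lines with
nearby endpoints fellow-travel. -/
def IsBoundedBicombing {G : Type*} [Group G] (X : Set G)
    (σ : G → G → ℕ → G) (k₁ k₂ : ℝ) : Prop :=
  ∀ x y x' y' : G, ∀ t : ℕ,
    (wordDist X (σ x y t) (σ x' y' t) : ℝ) ≤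
      k₁ * max (wordDist X x x' : ℝ) (wordDist X y y' : ℝ) + k₂

/-- A bicombing is `(lam, eps)`-quasi-geodesic if each combing line is a
`(lam, eps)`-quasi-geodesic. -/
def IsQuasiGeodesicBicombing {G : Type*} [Group G] (X : Set G)
    (σ : G → G → ℕ → G) (T : G → G → ℕ) (lam eps : ℝ) : Prop :=
  ∀ x y : G, ∀ s t : ℕ, s ≤ T x y → t ≤ T x y →
    (1 / lam) * |(s : ℝ) - t| - eps ≤ (wordDist X (σ x y s) (σ x y t) : ℝ) ∧
    (wordDist X (σ x y s) (σ x y t) : ℝ) ≤ lam * |(s : ℝ) - t| + eps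

section aux
variable {G : Type*} [Group G] {X : Set G}

theorem relWords_nonempty (hXgen : Subgroup.closure X = ⊤) (g : G) :
    (relWords X g).Nonempty := by
  have hg : g ∈ Submonoid.closure (X ∪ X⁻¹) := by
    rw [← Subgroup.closure_toSubmonoid, hXgen]; trivial
  obtain ⟨l, hl, hp⟩ := Submonoid.exists_list_of_mem_closure hg
  refine ⟨l.length, l, rfl, fun x hx => ?_, hp⟩
  rcases hl x hx with h | h
  · exact Or.inl h
  · exact Or.inr (Set.mem_inv.mp h)

theorem wordNorm_le_of_list {g : G} {l : List G}
    (hl : ∀ x ∈ l, x ∈ X ∨ x⁻¹ ∈ X) (hp : l.prod = g) : wordNorm X g ≤ l.length :=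
  Nat.sInf_le ⟨l, rfl, hl, hp⟩

theorem exists_list_wordNorm (hXgen : Subgroup.closure X = ⊤) (g : G) :
    ∃ l : List G, l.length = wordNorm X g ∧ (∀ x ∈ l, x ∈ X ∨ x⁻¹ ∈ X) ∧ l.prod = g :=
  Nat.sInf_mem (relWords_nonempty hXgen g)

theorem wordNorm_one' : wordNorm X (1 : G) = 0 :=
  Nat.le_zero.mp (wordNorm_le_of_list (l := []) (by simp) rfl)

theorem wordNorm_mul_le (hXgen : Subgroup.closure X = ⊤) (a b : G) :
    wordNorm X (a * b) ≤ wordNorm X a + wordNorm X b := by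
  obtain ⟨l₁, h1, m1, p1⟩ := exists_list_wordNorm hXgen a
  obtain ⟨l₂, h2, m2, p2⟩ := exists_list_wordNorm hXgen b
  have hp : (l₁ ++ l₂).prod = a * b := by rw [List.prod_append, p1, p2]
  have := wordNorm_le_of_list (fun x hx => (List.mem_append.mp hx).elim (m1 x) (m2 x)) hp
  simpa [h1, h2] using this

theorem wordNorm_inv_le (hXgen : Subgroup.closure X = ⊤) (g : G) :
    wordNorm X g⁻¹ ≤ wordNorm X g := by
  obtain ⟨l, hlen, hm, hp⟩ := exists_list_wordNorm hXgen g
  have hp' : ((l.map fun x => x⁻¹).reverse).prod = g⁻¹ := by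
    rw [← List.prod_inv_reverse, hp]
  have hm' : ∀ x ∈ (l.map fun x => x⁻¹).reverse, x ∈ X ∨ x⁻¹ ∈ X := by
    intro x hx
    rw [List.mem_reverse, List.mem_map] at hx
    obtain ⟨y, hy, rfl⟩ := hx
    rcases hm y hy with h | h
    · exact Or.inr (by simpa using h)
    · exact Or.inl h
  have := wordNorm_le_of_list hm' hp'
  simpa [hlen] using this

theorem wordNorm_inv (hXgen : Subgroup.closure X = ⊤) (g : G) :
    wordNorm X g⁻¹ = wordNorm X g :=
  le_antisymm (wordNorm_inv_le hXgen g) (by simpa using wordNorm_inv_le hXgen g⁻¹)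

theorem wordDist_triangle (hXgen : Subgroup.closure X = ⊤) (a b c : G) :
    wordDist X a c ≤ wordDist X a b + wordDist X b c := by
  have : a⁻¹ * c = (a⁻¹ * b) * (b⁻¹ * c) := by group
  unfold wordDist
  rw [this]
  exact wordNorm_mul_le hXgen _ _

theorem wordDist_comm (hXgen : Subgroup.closure X = ⊤) (a b : G) :
    wordDist X a b = wordDist X b a := by
  unfold wordDist
  rw [← wordNorm_inv hXgen (a⁻¹ * b)]
  congr 1
  group

theorem wordNorm_listProd_le (hXgen : Subgroup.closure X = ⊤) :
    ∀ l : List G, wordNorm X l.prod ≤ (l.map (wordNorm X)).sum := by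
  intro l
  induction l with
  | nil => simp [wordNorm_one']
  | cons a l ih =>
    simp only [List.prod_cons, List.map_cons, List.sum_cons]
    exact (wordNorm_mul_le hXgen a l.prod).trans (by omega)

theorem prod_range_telescope' (f : ℕ → G) (n : ℕ) :
    ((List.range n).map (fun i => (f i)⁻¹ * f (i + 1))).prod = (f 0)⁻¹ * f n := by
  induction n with
  | zero => simp
  | succ n ih =>
    rw [List.range_succ, List.map_append, List.prod_append]
    simp [ih, mul_assoc]

theorem ball_finite (hXfin : X.Finite) :
    ∀ n : ℕ, {g : G | ∃ l : List G, l.length ≤ n ∧ (∀ x ∈ l, x ∈ X ∨ x⁻¹ ∈ X) ∧ l.prod = g}.Finite := by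
  intro n
  induction n with
  | zero =>
    apply Set.Finite.subset (Set.finite_singleton (1 : G))
    rintro g ⟨l, hlen, -, hp⟩
    have : l = [] := List.length_eq_zero_iff.mp (Nat.le_zero.mp hlen)
    subst this
    simp at hp
    simp [← hp]
  | succ n ih =>
    have hS : (X ∪ X⁻¹ : Set G).Finite := hXfin.union hXfin.inv
    apply Set.Finite.subset
      ((hS.biUnion (fun s _ => ih.image (fun g => s * g))).insert 1)
    rintro g ⟨l, hlen, hmem, hp⟩
    cases l with
    | nil => simp at hp; simp [← hp]
    | cons a l' =>
      right
      have ha : a ∈ X ∪ X⁻¹ := by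
        rcases hmem a (List.mem_cons_self (a := a) (l := l')) with h | h
        · exact Set.mem_union_left _ h
        · exact Set.mem_union_right _ (Set.mem_inv.mpr h)
      refine Set.mem_biUnion ha ⟨l'.prod, ⟨l', by simpa using hlen,
        fun x hx => hmem x (List.mem_cons_of_mem _ hx), rfl⟩, ?_⟩
      simpa using hp

theorem normBall_finite (hXfin : X.Finite) (hXgen : Subgroup.closure X = ⊤) (n : ℕ) :
    {g : G | wordNorm X g ≤ n}.Finite := by
  apply (ball_finite hXfin n).subset
  intro g hg
  obtain ⟨l, hlen, hm, hp⟩ := exists_list_wordNorm hXgen g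
  exact ⟨l, le_trans (le_of_eq hlen) hg, hm, hp⟩

end aux

/-- Alonso–Bridson Lemma 7.2: if `σ` is a quasi-geodesic bicombing of `G` and
`H ≤ G` is `σ`-quasi-convex with constant `k`, then `H` is finitely generated
and the inclusion `H ↪ G` is a quasi-isometric embedding. -/
theorem quasiconvex_qi_embedded {G : Type*} [Group G]
    (X : Set G) (hXfin : X.Finite) (hXgen : Subgroup.closure X = ⊤)
    (σ : G → G → ℕ → G) (T : G → G → ℕ) (hbi : IsBicombing X σ T)
    (lam eps : ℝ) (hlam : 1 ≤ lam) (heps : 0 ≤ eps)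
    (hqg : IsQuasiGeodesicBicombing X σ T lam eps)
    (H : Subgroup G) (k : ℝ) (hk : 0 ≤ k)
    (hqc : ∀ h ∈ H, ∀ t : ℕ, ∃ h' ∈ H, (wordDist X (σ 1 h t) h' : ℝ) ≤ k) :
    ∃ Y : Set H, Y.Finite ∧ Subgroup.closure Y = ⊤ ∧
      ∃ lam' C : ℝ, 1 ≤ lam' ∧ 0 ≤ C ∧ ∀ h h' : H,
        (1 / lam') * (wordDist Y h h' : ℝ) - C ≤ (wordDist X (h : G) (h' : G) : ℝ) ∧
        (wordDist X (h : G) (h' : G) : ℝ) ≤ lam' * (wordDist Y h h' : ℝ) + C := by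
  classical
  have hlam0 : (0 : ℝ) < lam := lt_of_lt_of_le one_pos hlam
  set K : ℕ := ⌈k⌉₊ with hKdef
  set R : ℕ := 2 * K + 1 with hRdef
  set Y : Set H := {y : H | wordNorm X (y : G) ≤ R} with hYdef
  have hYfin : Y.Finite := by
    have : Y = Subtype.val ⁻¹' {g : G | wordNorm X g ≤ R} := rfl
    rw [this]
    exact Set.Finite.preimage (Subtype.val_injective.injOn) (normBall_finite hXfin hXgen R)
  -- main construction
  have main : ∀ (g : G) (hg : g ∈ H), ∃ l : List H,
      (∀ y ∈ l, y ∈ Y) ∧ l.prod = ⟨g, hg⟩ ∧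
      ((l.length : ℝ) ≤ lam * ((wordNorm X g : ℝ) + eps) + 2) := by
    intro g hg
    choose c hcH hck using hqc g hg
    have hckn : ∀ t, wordDist X (σ 1 g t) (c t) ≤ K := by
      intro t
      exact_mod_cast (hck t).trans (Nat.le_ceil k)
    set Tg := T 1 g with hTgdef
    set f : ℕ → G := fun t => if t = 0 then 1 else if t ≤ Tg + 1 then c (t - 1) else g
      with hfdef
    have hfH : ∀ t, f t ∈ H := by
      intro t
      simp only [hfdef]
      split
      · exact one_mem H
      split
      · exact hcH _
      · exact hg
    set L : List H := (List.range (Tg + 2)).map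
      (fun i => (⟨(f i)⁻¹ * f (i + 1), H.mul_mem (H.inv_mem (hfH i)) (hfH (i+1))⟩ : H))
      with hLdef
    have htri := wordDist_triangle hXgen (X := X)
    have hcomm := wordDist_comm hXgen (X := X)
    refine ⟨L, ?_, ?_, ?_⟩
    · -- entries in Y
      intro y hy
      simp only [hLdef, List.mem_map, List.mem_range] at hy
      obtain ⟨i, hi, rfl⟩ := hy
      show wordNorm X ((f i)⁻¹ * f (i + 1)) ≤ R
      have : wordNorm X ((f i)⁻¹ * f (i + 1)) = wordDist X (f i) (f (i+1)) := rfl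
      rw [this]
      by_cases h0 : i = 0
      · subst h0
        have h1 : f 0 = 1 := by simp [hfdef]
        have h2 : f 1 = c 0 := by simp [hfdef]
        rw [h1, h2]
        have := hckn 0
        rw [hbi.start 1 g] at this
        omega
      by_cases hT : i = Tg + 1
      · subst hT
        have h1 : f (Tg + 1) = c Tg := by simp [hfdef]
        have h2 : f (Tg + 2) = g := by
          simp only [hfdef]
          rw [if_neg (by omega), if_neg (by omega)]
        rw [h1, h2]
        have hσ : σ 1 g Tg = g := hbi.ends 1 g Tg le_rfl
        have := hckn Tg
        rw [hσ] at this
        rw [hcomm]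
        omega
      · -- middle: 1 ≤ i ≤ Tg
        have hile : 1 ≤ i ∧ i ≤ Tg := by omega
        have h1 : f i = c (i - 1) := by
          simp only [hfdef]
          rw [if_neg h0, if_pos (by omega)]
        have h2 : f (i + 1) = c i := by
          simp only [hfdef]
          rw [if_neg (by omega), if_pos (by omega)]
          congr 1
        rw [h1, h2]
        have hstep := hbi.step 1 g (i - 1)
        have hi1 : i - 1 + 1 = i := by omega
        rw [hi1] at hstep
        have t1 := htri (c (i-1)) (σ 1 g (i-1)) (c i)
        have t2 := htri (σ 1 g (i-1)) (σ 1 g i) (c i)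
        have e1 : wordDist X (c (i-1)) (σ 1 g (i-1)) = wordDist X (σ 1 g (i-1)) (c (i-1)) :=
          hcomm _ _
        have := hckn (i - 1)
        have := hckn i
        omega
    · -- product
      have hcoe : ((L.prod : H) : G) = g := by
        have : ((L.prod : H) : G) = (L.map (Subtype.val)).prod := by
          exact (SubmonoidClass.coe_list_prod L).trans rfl
        rw [this]
        have : L.map Subtype.val = (List.range (Tg + 2)).map (fun i => (f i)⁻¹ * f (i + 1)) := by
          simp [hLdef, List.map_map, Function.comp]
        rw [this, prod_range_telescope' f (Tg + 2)]
        have h0 : f 0 = 1 := by simp [hfdef]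
        have hN : f (Tg + 2) = g := by
          simp only [hfdef]
          rw [if_neg (by omega), if_neg (by omega)]
        rw [h0, hN]
        simp
      exact Subtype.ext hcoe
    · -- length bound
      have hlen : L.length = Tg + 2 := by simp [hLdef]
      rw [hlen]
      have hq := (hqg 1 g 0 Tg (Nat.zero_le _) le_rfl).1
      rw [hbi.start 1 g, hbi.ends 1 g Tg le_rfl] at hq
      have hd : wordDist X 1 g = wordNorm X g := by
        unfold wordDist
        simp
      rw [hd] at hq
      have habs : |((0 : ℕ) : ℝ) - (Tg : ℝ)| = (Tg : ℝ) := by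
        rw [abs_sub_comm]
        simp
      rw [habs] at hq
      -- (1/lam) * Tg - eps ≤ wordNorm X g  ⟹ Tg ≤ lam * (norm + eps)
      have hTle : (Tg : ℝ) ≤ lam * ((wordNorm X g : ℝ) + eps) := by
        have h1 : (1 / lam) * (Tg : ℝ) ≤ (wordNorm X g : ℝ) + eps := by linarith
        calc (Tg : ℝ) = lam * ((1/lam) * Tg) := by field_simp
          _ ≤ lam * ((wordNorm X g : ℝ) + eps) := by
              exact mul_le_mul_of_nonneg_left h1 (le_of_lt hlam0)
      push_cast
      linarith
  -- closure Y = ⊤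
  have hclosure : Subgroup.closure Y = ⊤ := by
    rw [eq_top_iff]
    rintro x -
    obtain ⟨l, hlY, hlp, -⟩ := main (x : G) x.2
    have : l.prod = x := hlp
    rw [← this]
    exact list_prod_mem (fun y hy => Subgroup.subset_closure (hlY y hy))
  -- bounds for single elements
  have upper : ∀ z : H, (wordNorm X (z : G) : ℝ) ≤ (R : ℝ) * (wordNorm Y z : ℝ) := by
    intro z
    obtain ⟨l, hlen, hm, hp⟩ := exists_list_wordNorm hclosure z
    have hz : (z : G) = (l.map Subtype.val).prod := by
      rw [← (SubmonoidClass.coe_list_prod l).trans rfl, hp]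
    have h1 : wordNorm X (z : G) ≤ ((l.map Subtype.val).map (wordNorm X)).sum := by
      rw [hz]
      exact wordNorm_listProd_le hXgen _
    have h2 : ((l.map Subtype.val).map (wordNorm X)).sum ≤ (l.map Subtype.val).length * R := by
      have := List.sum_le_card_nsmul ((l.map Subtype.val).map (wordNorm X)) R ?_
      · simpa [smul_eq_mul, mul_comm] using this
      · intro x hx
        simp only [List.mem_map] at hx
        obtain ⟨w, ⟨y, hy, rfl⟩, rfl⟩ := hx
        rcases hm y hy with h | h
        · exact h
        · have : wordNorm X ((y : G)) = wordNorm X (((y⁻¹ : H) : G)) := by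
            push_cast
            rw [wordNorm_inv hXgen]
          rw [this]
          exact h
    have h3 : (l.map Subtype.val).length = wordNorm Y z := by simpa using hlen
    have : wordNorm X (z : G) ≤ wordNorm Y z * R := by
      calc wordNorm X (z : G) ≤ _ := h1
        _ ≤ _ := h2
        _ = wordNorm Y z * R := by rw [h3]
    calc (wordNorm X (z : G) : ℝ) ≤ ((wordNorm Y z * R : ℕ) : ℝ) := by exact_mod_cast this
      _ = (R : ℝ) * (wordNorm Y z : ℝ) := by push_cast; ring
  have lower : ∀ z : H, (wordNorm Y z : ℝ) ≤ lam * (wordNorm X (z : G) : ℝ) + (lam * eps + 2) := by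
    intro z
    obtain ⟨l, hlY, hlp, hlen⟩ := main (z : G) z.2
    have hprod : l.prod = z := hlp
    have h1 : wordNorm Y z ≤ l.length :=
      wordNorm_le_of_list (fun y hy => Or.inl (hlY y hy)) hprod
    have : (wordNorm Y z : ℝ) ≤ (l.length : ℝ) := by exact_mod_cast h1
    calc (wordNorm Y z : ℝ) ≤ (l.length : ℝ) := this
      _ ≤ lam * ((wordNorm X (z : G) : ℝ) + eps) + 2 := hlen
      _ = lam * (wordNorm X (z : G) : ℝ) + (lam * eps + 2) := by ring
  -- assemble
  refine ⟨Y, hYfin, hclosure, max lam (R : ℝ), lam * eps + 2, le_max_of_le_left hlam, ?_, ?_⟩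
  · positivity
  intro h h'
  set z : H := h⁻¹ * h' with hz
  have hdX : wordDist X (h : G) (h' : G) = wordNorm X (z : G) := by
    unfold wordDist
    push_cast [hz]
    rfl
  have hdY : wordDist Y h h' = wordNorm Y z := rfl
  rw [hdX, hdY]
  have hup := upper z
  have hlo := lower z
  have hRle : (R : ℝ) ≤ max lam (R : ℝ) := le_max_right _ _
  have hlamle : lam ≤ max lam (R : ℝ) := le_max_left _ _
  have hlam'pos : (0 : ℝ) < max lam (R : ℝ) := lt_of_lt_of_le hlam0 hlamle
  have hnY : (0 : ℝ) ≤ (wordNorm Y z : ℝ) := Nat.cast_nonneg _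
  have hnX : (0 : ℝ) ≤ (wordNorm X (z : G) : ℝ) := Nat.cast_nonneg _
  constructor
  · -- lower bound
    have key : (1 / max lam (R : ℝ)) * (wordNorm Y z : ℝ) ≤ (1 / lam) * (wordNorm Y z : ℝ) := by
      gcongr
    have h2 : (1 / lam) * (wordNorm Y z : ℝ) ≤ (wordNorm X (z : G) : ℝ) + (eps + 2 / lam) := by
      rw [div_mul_eq_mul_div, one_mul, div_le_iff₀ hlam0]
      nlinarith [hlo, div_mul_cancel₀ (2:ℝ) (ne_of_gt hlam0)]
    have h3 : eps + 2 / lam ≤ lam * eps + 2 := by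
      have : 2 / lam ≤ 2 := by
        rw [div_le_iff₀ hlam0]; nlinarith
      nlinarith
    linarith
  · -- upper bound
    have : (R : ℝ) * (wordNorm Y z : ℝ) ≤ max lam (R : ℝ) * (wordNorm Y z : ℝ) := by gcongr
    nlinarith [mul_nonneg (le_of_lt hlam0) heps]
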